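/- Let V and W be finite-dimensional real vector spaces, let P ⊆ V be a nonempty polytope with affineSpan ℝ P = ⊤, and let Q ⊆ W be a nonempty polytope. For every vertex w of Q (i.e., w ∈ extremePoints ℝ Q), the constant affine map f : V →ᵃ[ℝ] W with f(x) = w for all x is a vertex (extreme point) of the hom-polytope Hom(P,Q) = {f : V →ᵃ[ℝ] W | f '' P ⊆ Q}. -/

import Mathlib

/-- A polytope: the convex hull of a finite set of points. -/
def IsPolytope {V : Type*} [AddCommGroup V] [Module ℝ V] (P : Set V) : Prop :=
  ∃ F : Finset V, P = convexHull ℝ (F : Set V)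

lemma const_on_span {V W : Type*}
    [AddCommGroup V] [Module ℝ V] [AddCommGroup W] [Module ℝ W]
    {P : Set V} (hPspan : affineSpan ℝ P = ⊤) {w : W}
    (f : V →ᵃ[ℝ] W) (hf : ∀ x ∈ P, f x = w) : f = AffineMap.const ℝ V w := by
  have hsub : affineSpan ℝ P ≤ (affineSpan ℝ ({w} : Set W)).comap f := by
    rw [affineSpan_le]
    intro x hx
    simp [AffineSubspace.mem_comap, AffineSubspace.mem_affineSpan_singleton, hf x hx]
  ext x
  have : x ∈ (affineSpan ℝ ({w} : Set W)).comap f := by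
    apply hsub; rw [hPspan]; trivial
  simpa [AffineSubspace.mem_comap, AffineSubspace.mem_affineSpan_singleton] using this

theorem stmt_9 {V W : Type*}
    [AddCommGroup V] [Module ℝ V] [FiniteDimensional ℝ V]
    [AddCommGroup W] [Module ℝ W] [FiniteDimensional ℝ W]
    (P : Set V) (Q : Set W)
    (hP : IsPolytope P) (hPne : P.Nonempty) (hPspan : affineSpan ℝ P = ⊤)
    (hQ : IsPolytope Q) (hQne : Q.Nonempty)
    (w : W) (hw : w ∈ Set.extremePoints ℝ Q) :
    AffineMap.const ℝ V w ∈
      Set.extremePoints ℝ {f : V →ᵃ[ℝ] W | f '' P ⊆ Q} := by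
  constructor
  · intro y hy
    obtain ⟨x, -, rfl⟩ := hy
    exact hw.1
  · rintro f hf g hg ⟨a, b, ha, hb, hab, hfg⟩
    have key : ∀ x ∈ P, f x = w ∧ g x = w := by
      intro x hx
      refine ⟨hw.2 (hf ⟨x, hx, rfl⟩) (hg ⟨x, hx, rfl⟩) ⟨a, b, ha, hb, hab, ?_⟩, hw.2 (hg ⟨x, hx, rfl⟩) (hf ⟨x, hx, rfl⟩) ⟨b, a, hb, ha, by linarith, by have := congrArg (fun F : V →ᵃ[ℝ] W => F x) hfg; rw [add_comm]; simpa using this⟩⟩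
      have := congrArg (fun F : V →ᵃ[ℝ] W => F x) hfg
      simpa using this
    exact const_on_span hPspan f (fun x hx => (key x hx).1)
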